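/- Let m ∈ ℕ, Δ = {x ∈ [0,1]^{m+1} : x₀ < ... < x_m}, and let σ : Δ → [0,1]^m be a Borel measurable map such that σ(x) is obtained from x by deleting one coordinate, for every x ∈ Δ. Then σ is not finite-to-one. Consequently there is no Borel measurable (m+1)→m monotone compression scheme for the finite subsets of [0,1]. -/

import Mathlib

open MeasureTheory Set

theorem stmt_18 (m : ℕ)
    (Δ : Set (Fin (m + 1) → ℝ))
    (hΔ : Δ = {x | (∀ i, x i ∈ Set.Icc (0 : ℝ) 1) ∧ StrictMono x})
    (σ : (Fin (m + 1) → ℝ) → (Fin m → ℝ))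
    (hmeas : Measurable (Δ.restrict σ))
    (hdel : ∀ x ∈ Δ, ∃ i : Fin (m + 1), σ x = x ∘ i.succAbove) :
    ∃ y : Fin m → ℝ, {x ∈ Δ | σ x = y}.Infinite := by
  classical
  -- Δ is measurable
  have hΔmeas : MeasurableSet Δ := by
    rw [hΔ]
    have : {x : Fin (m + 1) → ℝ | (∀ i, x i ∈ Set.Icc (0 : ℝ) 1) ∧ StrictMono x}
        = (⋂ i, {x : Fin (m + 1) → ℝ | x i ∈ Set.Icc (0 : ℝ) 1}) ∩
          (⋂ i, ⋂ j, {x : Fin (m + 1) → ℝ | i < j → x i < x j}) := by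
      ext x
      simp only [Set.mem_setOf_eq, Set.mem_inter_iff, Set.mem_iInter, StrictMono]
    rw [this]
    apply MeasurableSet.inter
    · exact MeasurableSet.iInter fun i => (measurable_pi_apply i) measurableSet_Icc
    · refine MeasurableSet.iInter fun i => MeasurableSet.iInter fun j => ?_
      by_cases hij : i < j
      · have : {x : Fin (m + 1) → ℝ | i < j → x i < x j} = {x | x i < x j} := by
          ext x; simp [hij]
        rw [this]
        exact measurableSet_lt (measurable_pi_apply i) (measurable_pi_apply j)
      · have : {x : Fin (m + 1) → ℝ | i < j → x i < x j} = Set.univ := by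
          ext x; simp [hij]
        rw [this]; exact MeasurableSet.univ
  -- Δ has positive volume
  have hΔpos : volume Δ ≠ 0 := by
    set U : Set (Fin (m + 1) → ℝ) :=
      (⋂ i, {x : Fin (m + 1) → ℝ | x i ∈ Set.Ioo (0 : ℝ) 1}) ∩
      (⋂ i : Fin m, {x : Fin (m + 1) → ℝ | x i.castSucc < x i.succ}) with hU
    have hUopen : IsOpen U := by
      apply IsOpen.inter
      · exact isOpen_iInter_of_finite fun i => (isOpen_Ioo).preimage (continuous_apply i)
      · exact isOpen_iInter_of_finite fun i =>
          isOpen_lt (continuous_apply i.castSucc) (continuous_apply i.succ)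
    have hUsub : U ⊆ Δ := by
      rintro x ⟨hx1, hx2⟩
      rw [hΔ]
      simp only [Set.mem_iInter, Set.mem_setOf_eq] at hx1 hx2
      exact ⟨fun i => Set.Ioo_subset_Icc_self (hx1 i), Fin.strictMono_iff_lt_succ.2 hx2⟩
    have hUne : U.Nonempty := by
      refine ⟨fun i => ((i : ℕ) + 1) / (m + 2), ?_, ?_⟩
      · simp only [Set.mem_iInter, Set.mem_setOf_eq, Set.mem_Ioo]
        intro i
        have hilt : ((i : ℕ) : ℝ) < m + 1 := by
          exact_mod_cast i.isLt
        constructor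
        · positivity
        · rw [div_lt_one (by positivity)]
          linarith
      · simp only [Set.mem_iInter, Set.mem_setOf_eq]
        intro i
        have h1 : ((i.castSucc : ℕ) : ℝ) = (i : ℕ) := by simp
        have h2 : ((i.succ : ℕ) : ℝ) = (i : ℕ) + 1 := by push_cast [Fin.val_succ]; ring
        rw [h1, h2]
        exact div_lt_div_of_pos_right (by linarith) (by positivity)
    intro h0
    exact ((hUopen.measure_pos volume hUne).trans_le
      (measure_mono hUsub)).ne' h0
  -- the pieces A i
  set A : Fin (m + 1) → Set (Fin (m + 1) → ℝ) :=
    fun i => {x ∈ Δ | σ x = x ∘ i.succAbove} with hA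
  have hAmeas : ∀ i, MeasurableSet (A i) := by
    intro i
    have hB : MeasurableSet {x : Δ | Δ.restrict σ x = (x : Fin (m + 1) → ℝ) ∘ i.succAbove} := by
      apply measurableSet_eq_fun hmeas
      exact measurable_pi_iff.2 fun j =>
        (measurable_pi_apply (i.succAbove j)).comp measurable_subtype_coe
    have himg : Subtype.val ''
        {x : Δ | Δ.restrict σ x = (x : Fin (m + 1) → ℝ) ∘ i.succAbove} = A i := by
      ext x
      simp only [Set.mem_image, Set.mem_setOf_eq, hA, Set.restrict_apply, Subtype.exists,
        exists_and_right, exists_eq_right]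
      constructor
      · rintro ⟨hx, h⟩; exact ⟨hx, h⟩
      · rintro ⟨hx, h⟩; exact ⟨hx, h⟩
    rw [← himg]
    exact hΔmeas.subtype_image hB
  have hcover : Δ ⊆ ⋃ i, A i := by
    intro x hx
    obtain ⟨i, hi⟩ := hdel x hx
    exact Set.mem_iUnion.2 ⟨i, hx, hi⟩
  -- some A i has positive measure
  have : ∃ i, volume (A i) ≠ 0 := by
    by_contra h
    push_neg at h
    have : volume (⋃ i, A i) = 0 := by
      rw [measure_iUnion_null_iff]; exact h
    exact hΔpos (measure_mono_null hcover this)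
  obtain ⟨i, hApos⟩ := this
  -- split off coordinate i
  set e := MeasurableEquiv.piFinSuccAbove (fun _ : Fin (m + 1) => ℝ) i with he
  have hep : MeasurePreserving e volume (volume.prod volume) := by
    have := volume_preserving_piFinSuccAbove (fun _ : Fin (m + 1) => ℝ) i
    exact this
  set S : Set (ℝ × (Fin m → ℝ)) := e.symm ⁻¹' (A i) with hS
  have hSmeas : MeasurableSet S := e.symm.measurable (hAmeas i)
  have hSpos : (volume.prod volume) S ≠ 0 := by
    rw [(hep.symm e).measure_preimage (hAmeas i).nullMeasurableSet]
    exact hApos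
  -- swap and apply Fubini
  set T : Set ((Fin m → ℝ) × ℝ) := Prod.swap ⁻¹' S with hT
  have hTmeas : MeasurableSet T := measurable_swap hSmeas
  have hTpos : (volume.prod volume) T ≠ 0 := by
    rw [Measure.measurePreserving_swap.measure_preimage hSmeas.nullMeasurableSet]
    exact hSpos
  have : ¬ (∀ y : Fin m → ℝ, volume (Prod.mk y ⁻¹' T) = 0) := by
    intro hall
    apply hTpos
    rw [Measure.measure_prod_null hTmeas]
    exact Filter.Eventually.of_forall (fun y => by simpa using hall y)
  push_neg at this
  obtain ⟨y, hy⟩ := this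
  refine ⟨y, ?_⟩
  -- the slice is infinite
  have hslice : (Prod.mk y ⁻¹' T).Infinite := by
    intro hfin
    exact hy (hfin.measure_zero volume)
  have hmap : ∀ t ∈ Prod.mk y ⁻¹' T, e.symm (t, y) ∈ {x ∈ Δ | σ x = y} := by
    intro t ht
    have hx : e.symm (t, y) ∈ A i := ht
    obtain ⟨hxΔ, hxσ⟩ := hx
    have hcomp : (e.symm (t, y)) ∘ i.succAbove = y := by
      funext j
      simp [he, MeasurableEquiv.piFinSuccAbove, Fin.insertNthEquiv]
    exact ⟨hxΔ, by rw [hxσ, hcomp]⟩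
  have hinj : Set.InjOn (fun t => e.symm (t, y)) (Prod.mk y ⁻¹' T) := by
    intro a _ b _ hab
    have := e.symm.injective hab
    exact congrArg Prod.fst this
  have : ((fun t => e.symm (t, y)) '' (Prod.mk y ⁻¹' T)) ⊆ {x ∈ Δ | σ x = y} := by
    rintro _ ⟨t, ht, rfl⟩
    exact hmap t ht
  exact Set.Infinite.mono this (Set.Infinite.image hinj hslice)
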